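/- arXiv:1703.05073 — 2 statements merged into one kernel-verified Lean document; each statement's English description precedes it below -/
import Mathlib

section
/- The subspace I of tsns spanned by {Y_p, M_p | p ∈ (1/2)ℤ} is an ideal of tsns, and the quotient tsns/I is isomorphic as a Lie superalgebra to the N=1 Neveu–Schwarz algebra ns spanned by {L_n, G_r | n ∈ ℤ, r ∈ 1/2+ℤ}. -/
open Finsupp

/-- Basis indices of the twisted `N = 1` Schrödinger–Neveu–Schwarz algebra.
`L n` is `L_n` (`n ∈ ℤ`), `G k` is `G_{k+1/2}` (`k ∈ ℤ`),
`Y k` is `Y_{k/2}` and `M k` is `M_{k/2}` (`k ∈ ℤ`, so `k/2` ranges over `(1/2)ℤ`). -/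
inductive TIdx : Type
  | L : ℤ → TIdx
  | G : ℤ → TIdx
  | Y : ℤ → TIdx
  | M : ℤ → TIdx
  deriving DecidableEq

noncomputable section

/-- The underlying vector space of `tsns`: the free `ℂ`-vector space on the basis. -/
abbrev Tsns : Type := TIdx →₀ ℂ

/-- The basis vectors. -/
def bs (i : TIdx) : Tsns := Finsupp.single i 1

/-- The `ℤ₂`-parity of a basis vector. -/
def parity : TIdx → ZMod 2
  | .L _ => 0
  | .G _ => 1
  | .Y k => (k : ZMod 2)
  | .M k => (k : ZMod 2)

/-- The sign `(-1)^{ab}` for parities `a, b`. -/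
def sg (a b : ZMod 2) : ℂ := if a = 1 ∧ b = 1 then -1 else 1

/-- The super-bracket of `tsns` on basis vectors. -/
def brIdx : TIdx → TIdx → Tsns
  | .L n, .L m => ((m : ℂ) - n) • bs (.L (n + m))
  | .L n, .G k => ((k : ℂ) + 1/2 - n/2) • bs (.G (k + n))
  | .G k, .L n => (-((k : ℂ) + 1/2 - n/2)) • bs (.G (k + n))
  | .L n, .Y k => (if (k : ZMod 2) = 0 then ((k : ℂ) - n)/2 else (k : ℂ)/2) • bs (.Y (k + 2*n))
  | .Y k, .L n => (-(if (k : ZMod 2) = 0 then ((k : ℂ) - n)/2 else (k : ℂ)/2)) • bs (.Y (k + 2*n))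
  | .L n, .M k => (if (k : ZMod 2) = 0 then (k : ℂ)/2 else ((k : ℂ) + n)/2) • bs (.M (k + 2*n))
  | .M k, .L n => (-(if (k : ZMod 2) = 0 then (k : ℂ)/2 else ((k : ℂ) + n)/2)) • bs (.M (k + 2*n))
  | .G k, .G l => (2 : ℂ) • bs (.L (k + l + 1))
  | .G l, .Y k => (if (k : ZMod 2) = 0 then ((k : ℂ) - 2*l - 1)/4 else 2) • bs (.Y (k + 2*l + 1))
  | .Y k, .G l => (if (k : ZMod 2) = 0 then -(((k : ℂ) - 2*l - 1)/4) else 2) • bs (.Y (k + 2*l + 1))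
  | .G l, .M k => (if (k : ZMod 2) = 0 then (k : ℂ)/4 else 2) • bs (.M (k + 2*l + 1))
  | .M k, .G l => (if (k : ZMod 2) = 0 then -((k : ℂ)/4) else 2) • bs (.M (k + 2*l + 1))
  | .Y k, .Y l =>
      (if (k : ZMod 2) = 0 then (if (l : ZMod 2) = 0 then ((l : ℂ) - k)/4 else (l : ℂ)/4)
       else (if (l : ZMod 2) = 0 then -((k : ℂ)/4) else 2)) • bs (.M (k + l))
  | _, _ => 0

/-- The super-bracket of `tsns`, as a bilinear map. -/
def brk : Tsns →ₗ[ℂ] Tsns →ₗ[ℂ] Tsns :=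
  Finsupp.lsum ℂ fun i => LinearMap.toSpanSingleton ℂ _
    (Finsupp.lsum ℂ fun j => LinearMap.toSpanSingleton ℂ Tsns (brIdx i j))

/-- `x` is homogeneous of parity `σ`. -/
def IsHom (σ : ZMod 2) (x : Tsns) : Prop := ∀ i ∈ x.support, parity i = σ

/-- The tensor square `tsns ⊗ tsns`, modelled as the free vector space on pairs
of basis indices. -/
abbrev T2 : Type := (TIdx × TIdx) →₀ ℂ

/-- The tensor cube `tsns ⊗ tsns ⊗ tsns`. -/
abbrev T3 : Type := (TIdx × TIdx × TIdx) →₀ ℂ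

/-- The tensor product map `tsns × tsns → tsns ⊗ tsns`. -/
def tp : Tsns →ₗ[ℂ] Tsns →ₗ[ℂ] T2 :=
  Finsupp.lsum ℂ fun i => LinearMap.toSpanSingleton ℂ _
    (Finsupp.lsum ℂ fun j => LinearMap.toSpanSingleton ℂ T2 (Finsupp.single (i, j) 1))

/-- The tensor product map `tsns × tsns × tsns → tsns ⊗ tsns ⊗ tsns`. -/
def t3 : Tsns →ₗ[ℂ] Tsns →ₗ[ℂ] Tsns →ₗ[ℂ] T3 :=
  Finsupp.lsum ℂ fun i => LinearMap.toSpanSingleton ℂ _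
    (Finsupp.lsum ℂ fun j => LinearMap.toSpanSingleton ℂ _
      (Finsupp.lsum ℂ fun k => LinearMap.toSpanSingleton ℂ T3 (Finsupp.single (i, j, k) 1)))

/-- The adjoint diagonal action of `tsns` on `tsns ⊗ tsns`:
`x ∗ (a ⊗ b) = [x,a] ⊗ b + (-1)^{[x][a]} a ⊗ [x,b]`. -/
def star2 : Tsns →ₗ[ℂ] T2 →ₗ[ℂ] T2 :=
  Finsupp.lsum ℂ fun i => LinearMap.toSpanSingleton ℂ _
    (Finsupp.lsum ℂ fun p => LinearMap.toSpanSingleton ℂ T2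
      (tp (brIdx i p.1) (bs p.2) + sg (parity i) (parity p.1) • tp (bs p.1) (brIdx i p.2)))

/-- The adjoint diagonal action of `tsns` on `tsns ⊗ tsns ⊗ tsns`. -/
def star3 : Tsns →ₗ[ℂ] T3 →ₗ[ℂ] T3 :=
  Finsupp.lsum ℂ fun i => LinearMap.toSpanSingleton ℂ _
    (Finsupp.lsum ℂ fun t => LinearMap.toSpanSingleton ℂ T3
      (t3 (brIdx i t.1) (bs t.2.1) (bs t.2.2)
        + sg (parity i) (parity t.1) • t3 (bs t.1) (brIdx i t.2.1) (bs t.2.2)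
        + (sg (parity i) (parity t.1) * sg (parity i) (parity t.2.1)) •
            t3 (bs t.1) (bs t.2.1) (brIdx i t.2.2)))

/-- The super-twist map `τ(x ⊗ y) = (-1)^{[x][y]} y ⊗ x`. -/
def tau : T2 →ₗ[ℂ] T2 :=
  Finsupp.lsum ℂ fun p => LinearMap.toSpanSingleton ℂ T2
    (sg (parity p.1) (parity p.2) • Finsupp.single (p.2, p.1) 1)

/-- The super-cyclic map `ξ(x₁ ⊗ x₂ ⊗ x₃) = (-1)^{[x₁]([x₂]+[x₃])} x₂ ⊗ x₃ ⊗ x₁`. -/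
def xi : T3 →ₗ[ℂ] T3 :=
  Finsupp.lsum ℂ fun t => LinearMap.toSpanSingleton ℂ T3
    (sg (parity t.1) (parity t.2.1 + parity t.2.2) • Finsupp.single (t.2.1, t.2.2, t.1) 1)

/-- `Im(1⊗1 - τ) ⊆ tsns ⊗ tsns`. -/
def ImSkew : Submodule ℂ T2 := LinearMap.range (LinearMap.id - tau)

/-- `ℂ M₀ ⊗ M₀`, the tensor square of the center. -/
def CC : Submodule ℂ T2 := Submodule.span ℂ {Finsupp.single (TIdx.M 0, TIdx.M 0) 1}

/-- The `(1/2)ℤ`-degree of a basis vector, recorded in half-units (i.e. twice the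
degree, an integer). -/
def hdeg : TIdx → ℤ
  | .L n => 2*n
  | .G k => 2*k + 1
  | .Y k => k
  | .M k => k

/-- The degree (in half-units) of a basis vector of the tensor square. -/
def hdeg2 (p : TIdx × TIdx) : ℤ := hdeg p.1 + hdeg p.2

/-- `d : tsns → tsns ⊗ tsns` is a homogeneous derivation of `ℤ₂`-parity `π`:
`d [x,y] = (-1)^{[d][x]} x ∗ d y - (-1)^{[y]([d]+[x])} y ∗ d x`
(stated on homogeneous basis vectors). -/
def IsDerP (π : ZMod 2) (d : Tsns →ₗ[ℂ] T2) : Prop :=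
  ∀ i j : TIdx, d (brk (bs i) (bs j)) =
    sg π (parity i) • star2 (bs i) (d (bs j))
      - sg (parity j) (π + parity i) • star2 (bs j) (d (bs i))

/-- An even derivation `tsns → tsns ⊗ tsns`. -/
def IsDer2 (d : Tsns →ₗ[ℂ] T2) : Prop := IsDerP 0 d

/-- The special derivations `d^♮` on basis vectors (parameters `α, α†, β, β†`). -/
def dnatB (a a' b b' : ℂ) : TIdx → T2
  | .L n => (a * n) • Finsupp.single (.M 0, .M (2*n)) 1
      + (a' * n) • Finsupp.single (.M (2*n), .M 0) 1
  | .G k => (a * ((k : ℂ) + 1/2)) • Finsupp.single (.M 0, .M (2*k+1)) 1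
      + (a' * ((k : ℂ) + 1/2)) • Finsupp.single (.M (2*k+1), .M 0) 1
  | .Y k => b • Finsupp.single (.M 0, .Y k) 1 + b' • Finsupp.single (.Y k, .M 0) 1
  | .M k => (2*b) • Finsupp.single (.M 0, .M k) 1 + (2*b') • Finsupp.single (.M k, .M 0) 1

/-- The special derivations `d^♮ : tsns → tsns ⊗ tsns`. -/
def dnat (a a' b b' : ℂ) : Tsns →ₗ[ℂ] T2 :=
  Finsupp.lsum ℂ fun i => LinearMap.toSpanSingleton ℂ T2 (dnatB a a' b b' i)

/-- Multiplication by `(-1)^{σ·[u]}` on `tsns ⊗ tsns`. -/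
def twT2 (σ : ZMod 2) : T2 →ₗ[ℂ] T2 :=
  Finsupp.lsum ℂ fun p => LinearMap.toSpanSingleton ℂ T2
    (sg σ (parity p.1 + parity p.2) • Finsupp.single p 1)

/-- The coboundary `Δ_r (x) = (-1)^{[r][x]} x ∗ r`. -/
def Δr (r : T2) : Tsns →ₗ[ℂ] T2 :=
  Finsupp.lsum ℂ fun i => LinearMap.toSpanSingleton ℂ T2 (star2 (bs i) (twT2 (parity i) r))

/-- The embedding `tsns ⊗ (tsns ⊗ tsns) → tsns ⊗ tsns ⊗ tsns`. -/
def t13 : Tsns →ₗ[ℂ] T2 →ₗ[ℂ] T3 :=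
  Finsupp.lsum ℂ fun i => LinearMap.toSpanSingleton ℂ _
    (Finsupp.lsum ℂ fun q => LinearMap.toSpanSingleton ℂ T3 (Finsupp.single (i, q.1, q.2) 1))

/-- `1 ⊗ D : tsns ⊗ tsns → tsns ⊗ tsns ⊗ tsns` for an (even) linear map `D`. -/
def oneTensor (D : Tsns →ₗ[ℂ] T2) : T2 →ₗ[ℂ] T3 :=
  Finsupp.lsum ℂ fun p => LinearMap.toSpanSingleton ℂ T3 (t13 (bs p.1) (D (bs p.2)))

/-- The summand of `c(r)` coming from a pair of basis tensors
`p = a_i ⊗ b_i`, `q = a_j ⊗ b_j`. -/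
def cB (p q : TIdx × TIdx) : T3 :=
  sg (parity q.1) (parity p.2) • t3 (brIdx p.1 q.1) (bs p.2) (bs q.2)
    + t3 (bs p.1) (brIdx p.2 q.1) (bs q.2)
    + sg (parity q.1) (parity p.2) • t3 (bs p.1) (bs q.1) (brIdx p.2 q.2)

/-- `c` as a bilinear map. -/
def cY : T2 →ₗ[ℂ] T2 →ₗ[ℂ] T3 :=
  Finsupp.lsum ℂ fun p => LinearMap.toSpanSingleton ℂ _
    (Finsupp.lsum ℂ fun q => LinearMap.toSpanSingleton ℂ T3 (cB p q))

/-- `c(r) = [r¹²,r¹³] + [r¹²,r²³] + [r¹³,r²³]`. -/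
def cr (r : T2) : T3 := cY r r

/-- `(tsns, [·,·], D)` is a Lie superbialgebra: `Im D ⊆ Im(1⊗1−τ)`, the super
co-Jacobi identity holds, and `D` is a 1-cocycle. -/
def IsSuperBialg (D : Tsns →ₗ[ℂ] T2) : Prop :=
  (∀ x : Tsns, D x ∈ ImSkew) ∧
  (∀ x : Tsns,
    oneTensor D (D x) + xi (oneTensor D (D x)) + xi (xi (oneTensor D (D x))) = 0) ∧
  (∀ i j : TIdx, D (brk (bs i) (bs j)) =
    star2 (bs i) (D (bs j)) - sg (parity i) (parity j) • star2 (bs j) (D (bs i)))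

end

/-- Basis indices of the `N = 1` Neveu–Schwarz algebra: `L n` is `L_n`,
`G k` is `G_{k+1/2}`. -/
inductive NIdx : Type
  | L : ℤ → NIdx
  | G : ℤ → NIdx
  deriving DecidableEq

noncomputable section

/-- The underlying vector space of the Neveu–Schwarz algebra `ns`. -/
abbrev Ns : Type := NIdx →₀ ℂ

/-- Basis vectors of `ns`. -/
def nbs (i : NIdx) : Ns := Finsupp.single i 1

/-- The bracket of `ns` on basis vectors. -/
def nbrIdx : NIdx → NIdx → Ns
  | .L n, .L m => ((m : ℂ) - n) • nbs (.L (n + m))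
  | .L n, .G k => ((k : ℂ) + 1/2 - n/2) • nbs (.G (k + n))
  | .G k, .L n => (-((k : ℂ) + 1/2 - n/2)) • nbs (.G (k + n))
  | .G k, .G l => (2 : ℂ) • nbs (.L (k + l + 1))

/-- The bracket of `ns` as a bilinear map. -/
def nbrk : Ns →ₗ[ℂ] Ns →ₗ[ℂ] Ns :=
  Finsupp.lsum ℂ fun i => LinearMap.toSpanSingleton ℂ _
    (Finsupp.lsum ℂ fun j => LinearMap.toSpanSingleton ℂ Ns (nbrIdx i j))

end

noncomputable section

/-- The subspace `I` of `tsns` spanned by `{Y_p, M_p | p ∈ (1/2)ℤ}`. -/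
def Isub : Submodule ℂ Tsns :=
  Submodule.span ℂ {x : Tsns | ∃ k : ℤ, x = bs (TIdx.Y k) ∨ x = bs (TIdx.M k)}

end


noncomputable section Aux

def prj : TIdx → Ns
  | .L n => nbs (.L n)
  | .G k => nbs (.G k)
  | .Y _ => 0
  | .M _ => 0

def sprj : NIdx → Tsns
  | .L n => bs (.L n)
  | .G k => bs (.G k)

def pmap : Tsns →ₗ[ℂ] Ns :=
  Finsupp.lsum ℂ fun i => LinearMap.toSpanSingleton ℂ Ns (prj i)

def smap : Ns →ₗ[ℂ] Tsns :=
  Finsupp.lsum ℂ fun i => LinearMap.toSpanSingleton ℂ Tsns (sprj i)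

lemma pmap_bs (i : TIdx) : pmap (bs i) = prj i := by
  simp [pmap, bs]

lemma smap_nbs (i : NIdx) : smap (nbs i) = sprj i := by
  simp [smap, nbs]

lemma brk_bs (i j : TIdx) : brk (bs i) (bs j) = brIdx i j := by
  simp [brk, bs]

lemma nbrk_nbs (i j : NIdx) : nbrk (nbs i) (nbs j) = nbrIdx i j := by
  simp [nbrk, nbs]

lemma pmap_brIdx (i j : TIdx) : pmap (brIdx i j) = nbrk (pmap (bs i)) (pmap (bs j)) := by
  cases i <;> cases j <;>
    simp only [brIdx, map_smul, map_zero, pmap_bs, prj, nbrk_nbs, nbrIdx, smul_zero,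
      LinearMap.zero_apply, LinearMap.map_zero]

lemma pmap_brk (x y : Tsns) : pmap (brk x y) = nbrk (pmap x) (pmap y) := by
  induction x using Finsupp.induction_linear with
  | zero => simp
  | add a b ha hb => simp [ha, hb]
  | single i c =>
    induction y using Finsupp.induction_linear with
    | zero => simp
    | add a b ha hb => simp [ha, hb]
    | single j d =>
      have h1 : (Finsupp.single i c : Tsns) = c • bs i := by
        simp [bs, Finsupp.smul_single]
      have h2 : (Finsupp.single j d : Tsns) = d • bs j := by
        simp [bs, Finsupp.smul_single]
      rw [h1, h2]
      simp only [map_smul, LinearMap.smul_apply, LinearMap.map_smul]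
      rw [brk_bs, pmap_brIdx]

lemma pmap_smap (x : Ns) : pmap (smap x) = x := by
  induction x using Finsupp.induction_linear with
  | zero => simp
  | add a b ha hb => simp [ha, hb]
  | single i c =>
    have : (Finsupp.single i c : Ns) = c • nbs i := by simp [nbs, Finsupp.smul_single]
    rw [this, map_smul, map_smul, smap_nbs]
    cases i <;> simp [sprj, pmap_bs, prj]

lemma bs_Y_mem (k : ℤ) : bs (TIdx.Y k) ∈ Isub :=
  Submodule.subset_span ⟨k, Or.inl rfl⟩

lemma bs_M_mem (k : ℤ) : bs (TIdx.M k) ∈ Isub :=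
  Submodule.subset_span ⟨k, Or.inr rfl⟩

lemma sub_smap_pmap_mem (x : Tsns) : x - smap (pmap x) ∈ Isub := by
  induction x using Finsupp.induction_linear with
  | zero => simp
  | add a b ha hb =>
    have := Submodule.add_mem Isub ha hb
    rw [map_add, map_add] at *
    convert this using 1; abel
  | single i c =>
    have : (Finsupp.single i c : Tsns) = c • bs i := by simp [bs, Finsupp.smul_single]
    rw [this, map_smul, map_smul, pmap_bs]
    have : c • bs i - c • smap (prj i) = c • (bs i - smap (prj i)) := by
      rw [smul_sub]
    rw [this]
    apply Submodule.smul_mem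
    cases i with
    | L n => simp [prj, smap_nbs, sprj]
    | G k => simp [prj, smap_nbs, sprj]
    | Y k => simpa [prj] using bs_Y_mem k
    | M k => simpa [prj] using bs_M_mem k

lemma Isub_le_ker : Isub ≤ LinearMap.ker pmap := by
  rw [Isub, Submodule.span_le]
  rintro x ⟨k, rfl | rfl⟩ <;> simp [LinearMap.mem_ker, pmap_bs, prj]

lemma mem_Isub_of_pmap (x : Tsns) (h : pmap x = 0) : x ∈ Isub := by
  have := sub_smap_pmap_mem x
  rwa [h, map_zero, sub_zero] at this

end Aux

/-- `I = span{Y_p, M_p}` is an ideal of `tsns`, and the quotient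
`tsns/I` is isomorphic, as a Lie superalgebra, to the Neveu–Schwarz algebra `ns`. -/
theorem Isub_isIdeal_and_quotient_iso_ns :
    (∀ x : Tsns, ∀ v ∈ Isub, brk x v ∈ Isub) ∧
    (∃ e : (Tsns ⧸ Isub) ≃ₗ[ℂ] Ns, ∀ x y : Tsns,
      e (Submodule.Quotient.mk (brk x y)) =
        nbrk (e (Submodule.Quotient.mk x)) (e (Submodule.Quotient.mk y))) := by
  constructor
  · intro x v hv
    apply mem_Isub_of_pmap
    rw [pmap_brk]
    have : pmap v = 0 := Isub_le_ker hv
    rw [this, map_zero]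
  · refine ⟨LinearEquiv.ofLinear (Submodule.liftQ Isub pmap Isub_le_ker)
      (Isub.mkQ ∘ₗ smap) ?_ ?_, ?_⟩
    · refine LinearMap.ext fun x => ?_
      simp only [LinearMap.coe_comp, Function.comp_apply, Submodule.mkQ_apply,
        Submodule.liftQ_apply, LinearMap.id_coe, id_eq, pmap_smap]
    · apply Submodule.linearMap_qext
      refine LinearMap.ext fun x => ?_
      show Isub.mkQ (smap (Submodule.liftQ Isub pmap Isub_le_ker (Isub.mkQ x))) = Isub.mkQ x
      simp only [Submodule.mkQ_apply, Submodule.liftQ_apply]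
      rw [Submodule.Quotient.eq]
      simpa using Submodule.neg_mem _ (sub_smap_pmap_mem x)
    · intro x y
      simp only [LinearEquiv.ofLinear_apply, Submodule.Quotient.mk''_eq_mk]
      rw [Submodule.liftQ_apply, Submodule.liftQ_apply, Submodule.liftQ_apply, pmap_brk]
end

section
/- If r ∈ tsns ⊗ tsns satisfies x∗r = 0 for every x ∈ tsns (adjoint diagonal action), then r ∈ ℂ·(M_0 ⊗ M_0). -/
open Finsupp

noncomputable section Aux

/-- Index shift under bracketing with `L n`. -/
def shL (n : ℤ) : TIdx → TIdx
  | .L m => .L (n + m)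
  | .G k => .G (k + n)
  | .Y k => .Y (k + 2*n)
  | .M k => .M (k + 2*n)

/-- Coefficient under bracketing with `L n`. -/
def cL (n : ℤ) : TIdx → ℂ
  | .L m => (m : ℂ) - n
  | .G k => (k : ℂ) + 1/2 - n/2
  | .Y k => if (k : ZMod 2) = 0 then ((k : ℂ) - n)/2 else (k : ℂ)/2
  | .M k => if (k : ZMod 2) = 0 then (k : ℂ)/2 else ((k : ℂ) + n)/2

lemma brIdx_L (n : ℤ) (i : TIdx) : brIdx (.L n) i = cL n i • bs (shL n i) := by
  cases i <;> rfl

lemma shL_inj (n : ℤ) : Function.Injective (shL n) := by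
  intro a b hab
  cases a <;> cases b <;> simp [shL] at hab ⊢ <;> omega

lemma hdeg_shL (n : ℤ) (i : TIdx) : hdeg (shL n i) = hdeg i + 2*n := by
  cases i <;> simp [hdeg, shL] <;> ring

lemma sg_zero (b : ZMod 2) : sg 0 b = 1 := by
  rw [sg, if_neg]
  rintro ⟨h, -⟩
  exact absurd h (by decide)

lemma cL_M0 (n : ℤ) : cL n (.M 0) = 0 := by
  simp [cL]

lemma cL_ne_zero (n : ℤ) (i : TIdx) (h1 : -n < hdeg i) (h1' : hdeg i < n)
    (h2 : i ≠ .M 0) : cL n i ≠ 0 := by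
  cases i with
  | L m =>
    simp only [hdeg] at h1 h1'
    have hm : (m : ℤ) ≠ n := by omega
    simp only [cL, sub_ne_zero]
    exact_mod_cast hm
  | G k =>
    simp only [hdeg] at h1 h1'
    have hk : (2*k + 1 : ℤ) ≠ n := by omega
    simp only [cL]
    intro hc
    apply hk
    have : ((2*k + 1 : ℤ) : ℂ) = (n : ℂ) := by push_cast; linear_combination 2 * hc
    exact_mod_cast this
  | Y k =>
    simp only [hdeg] at h1 h1'
    by_cases he : (k : ZMod 2) = 0
    · have hkn : (k : ℤ) ≠ n := by omega
      simp only [cL, if_pos he]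
      intro hc
      apply hkn
      have : ((k : ℤ) : ℂ) = (n : ℂ) := by linear_combination 2 * hc
      exact_mod_cast this
    · have hk0 : (k : ℤ) ≠ 0 := by rintro rfl; exact he (by simp)
      simp only [cL, if_neg he]
      intro hc
      apply hk0
      have : ((k : ℤ) : ℂ) = 0 := by linear_combination 2 * hc
      exact_mod_cast this
  | M k =>
    simp only [hdeg] at h1 h1'
    by_cases he : (k : ZMod 2) = 0
    · have hk0 : (k : ℤ) ≠ 0 := by rintro rfl; exact h2 rfl
      simp only [cL, if_pos he]
      intro hc
      apply hk0
      have : ((k : ℤ) : ℂ) = 0 := by linear_combination 2 * hc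
      exact_mod_cast this
    · have hkn : (k : ℤ) + n ≠ 0 := by omega
      simp only [cL, if_neg he]
      intro hc
      apply hkn
      have : ((k + n : ℤ) : ℂ) = 0 := by push_cast; linear_combination 2 * hc
      exact_mod_cast this

lemma tp_bs_bs (a b : TIdx) : tp (bs a) (bs b) = Finsupp.single (a, b) 1 := by
  simp [tp, bs, Finsupp.lsum_single, LinearMap.toSpanSingleton_apply_one]

lemma star2_bs_apply (i : TIdx) (q : T2) :
    star2 (bs i) q = q.sum fun p c => c •
      (tp (brIdx i p.1) (bs p.2) + sg (parity i) (parity p.1) • tp (bs p.1) (brIdx i p.2)) := by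
  have h1 : star2 (bs i) = Finsupp.lsum ℂ fun p => LinearMap.toSpanSingleton ℂ T2
      (tp (brIdx i p.1) (bs p.2) + sg (parity i) (parity p.1) • tp (bs p.1) (brIdx i p.2)) := by
    show (Finsupp.lsum ℂ _) (Finsupp.single i 1) = _
    rw [Finsupp.lsum_single, LinearMap.toSpanSingleton_apply_one]
  rw [h1, Finsupp.lsum_apply]
  exact Finsupp.sum_congr fun p _ => LinearMap.toSpanSingleton_apply ℂ T2 _ _

lemma star2_L (n : ℤ) (q : T2) :
    star2 (bs (.L n)) q = q.sum fun p c =>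
      c • (cL n p.1 • Finsupp.single (shL n p.1, p.2) 1
          + cL n p.2 • Finsupp.single (p.1, shL n p.2) 1) := by
  rw [star2_bs_apply]
  refine Finsupp.sum_congr fun p _ => ?_
  have h1 : parity (TIdx.L n) = 0 := rfl
  rw [h1, sg_zero, one_smul, brIdx_L, brIdx_L, map_smul, LinearMap.smul_apply,
    map_smul, tp_bs_bs, tp_bs_bs]

lemma key_sum (r : T2) (h : ∀ x : Tsns, star2 x r = 0) (n : ℤ) (t : TIdx × TIdx) :
    ∑ p ∈ r.support, r p *
      ((if (shL n p.1, p.2) = t then cL n p.1 else 0)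
        + (if (p.1, shL n p.2) = t then cL n p.2 else 0)) = 0 := by
  have hx := h (bs (.L n))
  rw [star2_L] at hx
  have h0 := DFunLike.congr_fun hx t
  rw [Finsupp.sum_apply] at h0
  rw [Finsupp.sum] at h0
  refine Eq.trans (Finset.sum_congr rfl fun p _ => ?_) h0
  rw [Finsupp.smul_apply, Finsupp.add_apply, Finsupp.smul_apply, Finsupp.smul_apply,
    Finsupp.single_apply, Finsupp.single_apply]
  simp only [smul_eq_mul, mul_ite, mul_one, mul_zero]

end Aux

/-- if `r ∈ tsns ⊗ tsns` satisfies `x ∗ r = 0` for every `x ∈ tsns`,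
then `r ∈ CC`. -/
theorem annihilated_tensor_in_center (r : T2) (h : ∀ x : Tsns, star2 x r = 0) :
    r ∈ CC := by
  classical
  have hbound : ∀ p ∈ r.support, (hdeg p.1).natAbs + (hdeg p.2).natAbs ≤
      ∑ q ∈ r.support, ((hdeg q.1).natAbs + (hdeg q.2).natAbs) := fun p hp =>
    Finset.single_le_sum (f := fun q => (hdeg q.1).natAbs + (hdeg q.2).natAbs)
      (fun q _ => Nat.zero_le _) hp
  obtain ⟨N, hN⟩ : ∃ N : ℤ,
      N = 1 + (∑ q ∈ r.support, ((hdeg q.1).natAbs + (hdeg q.2).natAbs) : ℕ) := ⟨_, rfl⟩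
  -- Step 1: every pair in the support has first coordinate `M 0`.
  have step1 : ∀ p ∈ r.support, p.1 = TIdx.M 0 := by
    intro p₀ hp₀
    by_contra hne
    have hkey := key_sum r h N (shL N p₀.1, p₀.2)
    rw [Finset.sum_eq_single_of_mem p₀ hp₀ ?_] at hkey
    · have hif2 : (p₀.1, shL N p₀.2) ≠ (shL N p₀.1, p₀.2) := by
        intro hc
        have h1 : p₀.1 = shL N p₀.1 := (Prod.ext_iff.mp hc).1
        have h2 := hdeg_shL N p₀.1
        rw [← h1] at h2
        omega
      rw [if_pos rfl, if_neg hif2, add_zero] at hkey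
      have hr0 : r p₀ ≠ 0 := Finsupp.mem_support_iff.mp hp₀
      have hb := hbound p₀ hp₀
      have hc0 : cL N p₀.1 ≠ 0 := cL_ne_zero N p₀.1 (by omega) (by omega) hne
      exact (mul_ne_zero hr0 hc0) hkey
    · intro p hp hpne
      have hif1 : (shL N p.1, p.2) ≠ (shL N p₀.1, p₀.2) := by
        intro hc
        apply hpne
        have h1 : shL N p.1 = shL N p₀.1 := (Prod.ext_iff.mp hc).1
        have h2 : p.2 = p₀.2 := (Prod.ext_iff.mp hc).2
        exact Prod.ext_iff.mpr ⟨shL_inj N h1, h2⟩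
      have hif2 : (p.1, shL N p.2) ≠ (shL N p₀.1, p₀.2) := by
        intro hc
        have h1 : p.1 = shL N p₀.1 := (Prod.ext_iff.mp hc).1
        have hd : hdeg p.1 = hdeg p₀.1 + 2*N := by rw [h1, hdeg_shL]
        have hb1 := hbound p hp
        have hb2 := hbound p₀ hp₀
        omega
      rw [if_neg hif1, if_neg hif2, add_zero, mul_zero]
  -- Step 2: every pair in the support has second coordinate `M 0`.
  have step2 : ∀ p ∈ r.support, p.2 = TIdx.M 0 := by
    intro p₀ hp₀
    by_contra hne
    have hkey := key_sum r h N (TIdx.M 0, shL N p₀.2)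
    rw [Finset.sum_eq_single_of_mem p₀ hp₀ ?_] at hkey
    · rw [step1 p₀ hp₀, cL_M0] at hkey
      simp only [ite_self, eq_self_iff_true, if_true, zero_add] at hkey
      have hr0 : r p₀ ≠ 0 := Finsupp.mem_support_iff.mp hp₀
      have hb := hbound p₀ hp₀
      have hc0 : cL N p₀.2 ≠ 0 := cL_ne_zero N p₀.2 (by omega) (by omega) hne
      exact (mul_ne_zero hr0 hc0) hkey
    · intro p hp hpne
      have hif1 : (if (shL N p.1, p.2) = (TIdx.M 0, shL N p₀.2) then cL N p.1 else 0) = 0 := by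
        rw [step1 p hp, cL_M0, ite_self]
      have hif2 : (p.1, shL N p.2) ≠ (TIdx.M 0, shL N p₀.2) := by
        intro hc
        apply hpne
        have h2 : shL N p.2 = shL N p₀.2 := (Prod.ext_iff.mp hc).2
        have h1 : p.1 = p₀.1 := by rw [step1 p hp, step1 p₀ hp₀]
        exact Prod.ext_iff.mpr ⟨h1, shL_inj N h2⟩
      rw [hif1, if_neg hif2, add_zero, mul_zero]
  -- Conclude.
  have hsub : r.support ⊆ {(TIdx.M 0, TIdx.M 0)} := by
    intro p hp
    rw [Finset.mem_singleton]
    exact Prod.ext_iff.mpr ⟨step1 p hp, step2 p hp⟩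
  have hr : r = Finsupp.single (TIdx.M 0, TIdx.M 0) (r (TIdx.M 0, TIdx.M 0)) :=
    Finsupp.support_subset_singleton.mp hsub
  have hr' : r = (r (TIdx.M 0, TIdx.M 0)) • Finsupp.single (TIdx.M 0, TIdx.M 0) (1 : ℂ) := by
    rw [Finsupp.smul_single, smul_eq_mul, mul_one]; exact hr
  rw [hr']
  exact Submodule.smul_mem _ _ (Submodule.mem_span_singleton_self _)
end
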